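/- arXiv:1603.04021 — 3 statements merged into one kernel-verified Lean document; each statement's English description precedes it below -/
import Mathlib

section
/- Let R be a commutative ring of characteristic 2, and let v, y₁, y₂ ∈ R satisfy v² = v·y₁ + y₂. Then for every m ≥ 1, v^(2^m) = v·y₁^(2^m − 1) + ∑_{i=1}^{m} y₁^(2^m − 2^i)·y₂^(2^(i−1)). -/
lemma add_sq_char2 {R : Type*} [CommRing R] (h2 : (2 : R) = 0) (a b : R) :
    (a + b) ^ 2 = a ^ 2 + b ^ 2 := by
  linear_combination a * b * h2

lemma sum_sq_char2 {R : Type*} [CommRing R] (h2 : (2 : R) = 0) {ι : Type*}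
    (s : Finset ι) (f : ι → R) : (∑ i ∈ s, f i) ^ 2 = ∑ i ∈ s, (f i) ^ 2 := by
  induction s using Finset.cons_induction with
  | empty => simp
  | cons a s ha ih => rw [Finset.sum_cons, Finset.sum_cons, add_sq_char2 h2, ih]

theorem stmt_0 (R : Type*) [CommRing R] (h2 : (2 : R) = 0)
    (v y₁ y₂ : R) (h : v ^ 2 = v * y₁ + y₂) (m : ℕ) (hm : 1 ≤ m) :
    v ^ (2 ^ m) =
      v * y₁ ^ (2 ^ m - 1) +
        ∑ i ∈ Finset.Icc 1 m, y₁ ^ (2 ^ m - 2 ^ i) * y₂ ^ (2 ^ (i - 1)) := by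
  induction m, hm using Nat.le_induction with
  | base => simpa using h
  | succ m hm ih =>
    have h1 : v ^ (2 ^ (m + 1)) = (v ^ (2 ^ m)) ^ 2 := by
      rw [← pow_mul, pow_succ]
    rw [h1, ih, add_sq_char2 h2, sum_sq_char2 h2]
    have hterm : ∀ i ∈ Finset.Icc 1 m,
        (y₁ ^ (2 ^ m - 2 ^ i) * y₂ ^ (2 ^ (i - 1))) ^ 2 =
        y₁ ^ (2 ^ (m + 1) - 2 ^ (i + 1)) * y₂ ^ (2 ^ ((i + 1) - 1)) := by
      intro i hi
      obtain ⟨hi1, hi2⟩ := Finset.mem_Icc.mp hi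
      have hle : 2 ^ i ≤ 2 ^ m := Nat.pow_le_pow_right (by norm_num) hi2
      rw [mul_pow, ← pow_mul, ← pow_mul]
      congr 1
      · congr 1
        omega
      · congr 1
        rw [← pow_succ]
        congr 1
        omega
    rw [Finset.sum_congr rfl hterm]
    have hre : ∑ i ∈ Finset.Icc 1 m,
        y₁ ^ (2 ^ (m + 1) - 2 ^ (i + 1)) * y₂ ^ (2 ^ ((i + 1) - 1)) =
        ∑ j ∈ Finset.Icc 2 (m + 1), y₁ ^ (2 ^ (m + 1) - 2 ^ j) * y₂ ^ (2 ^ (j - 1)) := by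
      rw [show Finset.Icc 2 (m+1) = Finset.map (addRightEmbedding 1) (Finset.Icc 1 m) from
        by rw [Finset.map_add_right_Icc], Finset.sum_map]
      rfl
    rw [hre]
    have hsplit : ∑ j ∈ Finset.Icc 1 (m + 1),
        y₁ ^ (2 ^ (m + 1) - 2 ^ j) * y₂ ^ (2 ^ (j - 1)) =
        y₁ ^ (2 ^ (m + 1) - 2) * y₂ +
        ∑ j ∈ Finset.Icc 2 (m + 1), y₁ ^ (2 ^ (m + 1) - 2 ^ j) * y₂ ^ (2 ^ (j - 1)) := by
      rw [show Finset.Icc 1 (m+1) = insert 1 (Finset.Icc 2 (m+1)) from by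
        ext x; simp; omega]
      rw [Finset.sum_insert (by simp)]
      norm_num
    rw [hsplit]
    have hv2 : (v * y₁ ^ (2 ^ m - 1)) ^ 2 = v * y₁ ^ (2 ^ (m + 1) - 1)
        + y₁ ^ (2 ^ (m + 1) - 2) * y₂ := by
      have h2m : 1 ≤ 2 ^ m := Nat.one_le_two_pow
      rw [mul_pow, h, ← pow_mul]
      have e1 : (2 ^ m - 1) * 2 = 2 ^ (m + 1) - 2 := by
        rw [pow_succ]; omega
      have e2 : 2 ^ (m + 1) - 1 = (2 ^ (m + 1) - 2) + 1 := by
        have : 2 ≤ 2 ^ (m + 1) := by rw [pow_succ]; omega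
        omega
      rw [e1, e2, pow_succ]
      ring
    rw [hv2]
    ring
end

section
/- Let s ≥ 2, n ≥ 1 and let R = F₂[u, v]/(u^(2^((n+1)s)), v^(2^((n+1)s))). Define the F₂-algebra endomorphism t of R by t(u) = u and t(v) = v + u^(2^(ns)) + (v·u^(2^(ns)))^(2^(s−1)). Then t is an involution: t(t(v)) = v in R. -/
theorem stmt_9 (n s : ℕ) (hn : 1 ≤ n) (hs : 2 ≤ s) :
    let I : Ideal (MvPolynomial (Fin 2) (ZMod 2)) :=
      Ideal.span {(MvPolynomial.X 0 : MvPolynomial (Fin 2) (ZMod 2)) ^ (2 ^ ((n + 1) * s)),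
        (MvPolynomial.X 1 : MvPolynomial (Fin 2) (ZMod 2)) ^ (2 ^ ((n + 1) * s))}
    let u : MvPolynomial (Fin 2) (ZMod 2) ⧸ I := Ideal.Quotient.mk I (MvPolynomial.X 0)
    let v : MvPolynomial (Fin 2) (ZMod 2) ⧸ I := Ideal.Quotient.mk I (MvPolynomial.X 1)
    let tv := v + u ^ (2 ^ (n * s)) + (v * u ^ (2 ^ (n * s))) ^ (2 ^ (s - 1))
    tv + u ^ (2 ^ (n * s)) + (tv * u ^ (2 ^ (n * s))) ^ (2 ^ (s - 1)) = v := by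
  intro I u v tv
  set a : MvPolynomial (Fin 2) (ZMod 2) ⧸ I := u ^ (2 ^ (n * s)) with ha
  -- the ring has characteristic two
  have h2' : (2 : MvPolynomial (Fin 2) (ZMod 2)) = 0 := by
    have : ((2 : ℕ) : MvPolynomial (Fin 2) (ZMod 2)) = 0 := CharP.cast_eq_zero _ 2
    simpa using this
  have h2 : (2 : MvPolynomial (Fin 2) (ZMod 2) ⧸ I) = 0 := by
    rw [← map_ofNat (Ideal.Quotient.mk I) 2, h2', map_zero]
  have hx : ∀ x : MvPolynomial (Fin 2) (ZMod 2) ⧸ I, x + x = 0 := by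
    intro x; rw [← two_mul, h2, zero_mul]
  -- Frobenius is additive
  have hfr : ∀ (x y : MvPolynomial (Fin 2) (ZMod 2) ⧸ I) (k : ℕ),
      (x + y) ^ (2 ^ k) = x ^ (2 ^ k) + y ^ (2 ^ k) := by
    intro x y k
    induction k with
    | zero => simp
    | succ k ih =>
      rw [pow_succ, pow_mul, ih, pow_mul, pow_mul]
      linear_combination hx (x ^ 2 ^ k * y ^ 2 ^ k)
  -- u to the top power vanishes
  have hu0 : u ^ 2 ^ ((n + 1) * s) = 0 := by
    show (Ideal.Quotient.mk I (MvPolynomial.X 0)) ^ 2 ^ ((n + 1) * s) = 0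
    rw [← map_pow, Ideal.Quotient.eq_zero_iff_mem]
    exact Ideal.subset_span (Or.inl rfl)
  have hq : a ^ 2 ^ (s - 1) * a ^ 2 ^ (s - 1) = 0 := by
    rw [ha, ← pow_add, ← pow_mul]
    have hexp : 2 ^ (n * s) * (2 ^ (s - 1) + 2 ^ (s - 1)) = 2 ^ ((n + 1) * s) := by
      rw [← two_mul, ← pow_succ', ← pow_add]
      congr 1
      have : s - 1 + 1 = s := by omega
      rw [this]; ring
    rw [hexp, hu0]
  have hqq : (a ^ 2 ^ (s - 1)) ^ 2 ^ (s - 1) = 0 := by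
    have h2q : 2 ≤ 2 ^ (s - 1) := by
      calc 2 = 2 ^ 1 := (pow_one 2).symm
      _ ≤ 2 ^ (s - 1) := Nat.pow_le_pow_right (by norm_num) (by omega)
    have : (a ^ 2 ^ (s - 1)) ^ 2 ^ (s - 1)
        = (a ^ 2 ^ (s - 1) * a ^ 2 ^ (s - 1)) * (a ^ 2 ^ (s - 1)) ^ (2 ^ (s - 1) - 2) := by
      rw [← sq, ← pow_add]
      congr 1
      omega
    rw [this, hq, zero_mul]
  have htv : tv = v + a + (v * a) ^ (2 ^ (s - 1)) := rfl
  rw [htv, mul_pow v a, mul_pow, hfr (v + a) (v ^ 2 ^ (s - 1) * a ^ 2 ^ (s - 1)) (s - 1),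
    hfr v a (s - 1)]
  linear_combination hx a + hx (v ^ 2 ^ (s - 1) * a ^ 2 ^ (s - 1)) + hq
    + hqq * ((v ^ 2 ^ (s - 1)) ^ 2 ^ (s - 1) * a ^ 2 ^ (s - 1))
end

section
/- Let s ≥ 2, n ≥ 2 and R = F₂[u, v]/(u^(2^((n+1)s)), v^(2^((n+1)s))). Define t(u) = u + u^(2^(ns)) + u^((2^(ns)+1)·2^(s−1)) and set x̄₂ = u·t(u). Then x̄₂^(2^(ns−1)) = u^(2^(ns)) in R. -/
theorem stmt_13 (n s : ℕ) (hn : 2 ≤ n) (hs : 2 ≤ s) :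
    let I : Ideal (MvPolynomial (Fin 2) (ZMod 2)) :=
      Ideal.span {(MvPolynomial.X 0 : MvPolynomial (Fin 2) (ZMod 2)) ^ (2 ^ ((n + 1) * s)),
        (MvPolynomial.X 1 : MvPolynomial (Fin 2) (ZMod 2)) ^ (2 ^ ((n + 1) * s))}
    let u : MvPolynomial (Fin 2) (ZMod 2) ⧸ I := Ideal.Quotient.mk I (MvPolynomial.X 0)
    let tu := u + u ^ (2 ^ (n * s)) + u ^ ((2 ^ (n * s) + 1) * 2 ^ (s - 1))
    let x₂ := u * tu
    x₂ ^ (2 ^ (n * s - 1)) = u ^ (2 ^ (n * s)) := by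
  intro I u tu x₂
  set N := (n + 1) * s with hNdef
  -- 1 ∉ I
  have hproper : (1 : MvPolynomial (Fin 2) (ZMod 2)) ∉ I := by
    intro h
    have hle : I ≤ RingHom.ker (MvPolynomial.aeval (fun _ => (0 : ZMod 2))).toRingHom := by
      rw [Ideal.span_le]
      rintro p (rfl | rfl) <;>
        simp [RingHom.mem_ker, zero_pow (Nat.two_pow_pos N).ne']
    have := hle h
    simp [RingHom.mem_ker] at this
  haveI : CharP (MvPolynomial (Fin 2) (ZMod 2) ⧸ I) 2 := by
    apply CharP.quotient' 2 I
    intro x hx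
    rcases Nat.even_or_odd x with he | ho
    · exact (CharP.cast_eq_zero_iff _ 2 x).mpr he.two_dvd
    · exfalso
      obtain ⟨m, rfl⟩ := ho
      have : ((2 * m + 1 : ℕ) : MvPolynomial (Fin 2) (ZMod 2)) = 1 := by
        push_cast
        rw [show (2 : MvPolynomial (Fin 2) (ZMod 2)) = ((2 : ℕ) : MvPolynomial (Fin 2) (ZMod 2))
          by norm_cast, CharP.cast_eq_zero]
        ring
      rw [this] at hx
      exact hproper hx
  have hu0 : u ^ (2 ^ N) = 0 := by
    show (Ideal.Quotient.mk I (MvPolynomial.X 0)) ^ (2 ^ N) = 0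
    rw [← map_pow, Ideal.Quotient.eq_zero_iff_mem]
    exact Ideal.subset_span (Or.inl rfl)
  have hvan : ∀ e : ℕ, 2 ^ N ≤ e → u ^ e = 0 := by
    intro e he
    rw [← Nat.sub_add_cancel he, pow_add, hu0, mul_zero]
  -- expand x₂
  have hx₂ : x₂ = u ^ 2 + u ^ (2 ^ (n * s) + 1) + u ^ ((2 ^ (n * s) + 1) * 2 ^ (s - 1) + 1) := by
    show u * tu = _
    show u * (u + u ^ (2 ^ (n * s)) + u ^ ((2 ^ (n * s) + 1) * 2 ^ (s - 1))) = _
    ring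
  have hns : 1 ≤ n * s := le_trans (by norm_num) (Nat.mul_le_mul hn hs)
  have hNe : N = n * s + s := by rw [hNdef]; ring
  have hns2 : s + 1 ≤ n * s := by nlinarith
  set k := n * s - 1 with hkdef
  have hk1 : k + 1 = n * s := Nat.sub_add_cancel hns
  have hfrob : x₂ ^ (2 ^ k) =
      (u ^ 2) ^ (2 ^ k) + (u ^ (2 ^ (n * s) + 1)) ^ (2 ^ k)
        + (u ^ ((2 ^ (n * s) + 1) * 2 ^ (s - 1) + 1)) ^ (2 ^ k) := by
    rw [hx₂, add_pow_char_pow, add_pow_char_pow]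
  have h1 : (u ^ 2) ^ (2 ^ k) = u ^ (2 ^ (n * s)) := by
    rw [← pow_mul, ← hk1, pow_succ, mul_comm (2 ^ k) 2, mul_comm 2 (2 ^ k)]
  have h2 : (u ^ (2 ^ (n * s) + 1)) ^ (2 ^ k) = 0 := by
    rw [← pow_mul]
    apply hvan
    calc 2 ^ N ≤ 2 ^ (n * s + k) := by
          apply Nat.pow_le_pow_right (by norm_num)
          omega
      _ = 2 ^ (n * s) * 2 ^ k := pow_add 2 _ _
      _ ≤ (2 ^ (n * s) + 1) * 2 ^ k := by
          apply Nat.mul_le_mul_right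
          omega
  have h3 : (u ^ ((2 ^ (n * s) + 1) * 2 ^ (s - 1) + 1)) ^ (2 ^ k) = 0 := by
    rw [← pow_mul]
    apply hvan
    have hs1 : s - 1 + 1 = s := Nat.sub_add_cancel (by omega)
    calc 2 ^ N ≤ 2 ^ (n * s + (s - 1) + k) := by
          apply Nat.pow_le_pow_right (by norm_num)
          omega
      _ = 2 ^ (n * s) * 2 ^ (s - 1) * 2 ^ k := by rw [pow_add, pow_add]
      _ ≤ ((2 ^ (n * s) + 1) * 2 ^ (s - 1) + 1) * 2 ^ k := by
          apply Nat.mul_le_mul_right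
          have : 2 ^ (n * s) * 2 ^ (s - 1) ≤ (2 ^ (n * s) + 1) * 2 ^ (s - 1) :=
            Nat.mul_le_mul_right _ (by omega)
          omega
  show x₂ ^ (2 ^ k) = u ^ (2 ^ (n * s))
  rw [hfrob, h1, h2, h3, add_zero, add_zero]
end
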